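/- There exists no monic real polynomial P = x^6 + a_5 x^5 + a_4 x^4 + a_3 x^3 + a_2 x^2 + a_1 x + a_0 with a_5 > 0, a_4 < 0, a_3 > 0, a_2 > 0, a_1 > 0, a_0 > 0 that has exactly two positive real roots, both simple, and no negative real root. -/

import Mathlib

open Polynomial

set_option maxHeartbeats 1000000 in
/-- There is no monic real degree 6 polynomial with sign pattern `(+,+,-,+,+,+,+)`
having exactly two positive roots, both simple, and no negative root. -/
theorem no_deg6_sp_ppmpppp_ap20 :
    ¬ ∃ (a5 a4 a3 a2 a1 a0 : ℝ) (P : Polynomial ℝ),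
      0 < a5 ∧ a4 < 0 ∧ 0 < a3 ∧ 0 < a2 ∧ 0 < a1 ∧ 0 < a0 ∧
      P = X ^ 6 + C a5 * X ^ 5 + C a4 * X ^ 4 + C a3 * X ^ 3 +
          C a2 * X ^ 2 + C a1 * X + C a0 ∧
      (P.roots.filter (fun x => 0 < x)).card = 2 ∧
      (P.roots.filter (fun x => 0 < x)).Nodup ∧
      (∀ x : ℝ, x < 0 → ¬ P.IsRoot x) := by
  rintro ⟨a5, a4, a3, a2, a1, a0, P, h5, h4, h3, h2, h1, h0, hP, hcard, hnodup, hneg⟩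
  -- extract a positive root α
  have hne : (P.roots.filter (fun x => 0 < x)) ≠ 0 := by
    intro h
    rw [h] at hcard
    simp at hcard
  obtain ⟨α, hα⟩ := Multiset.exists_mem_of_ne_zero hne
  rw [Multiset.mem_filter] at hα
  obtain ⟨hαr, hαpos⟩ := hα
  have hroot : P.IsRoot α := (Polynomial.mem_roots'.mp hαr).2
  have hPα : α ^ 6 + a5 * α ^ 5 + a4 * α ^ 4 + a3 * α ^ 3 + a2 * α ^ 2 + a1 * α + a0 = 0 := by
    have h := hroot
    rw [hP] at h
    simpa [Polynomial.IsRoot] using h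
  -- evaluation formula
  have heval : ∀ x : ℝ, P.eval x =
      x ^ 6 + a5 * x ^ 5 + a4 * x ^ 4 + a3 * x ^ 3 + a2 * x ^ 2 + a1 * x + a0 := by
    intro x
    rw [hP]
    simp
  -- P(-α) < 0 since all odd coefficients are positive
  have hPnα : P.eval (-α) < 0 := by
    rw [heval]
    nlinarith [pow_pos hαpos 5, pow_pos hαpos 3, hαpos,
      mul_pos h5 (pow_pos hαpos 5), mul_pos h3 (pow_pos hαpos 3), mul_pos h1 hαpos]
  -- P(-t) > 0 for a suitably large t
  set t : ℝ := 1 + α + a5 + (-a4) + a3 + a1 with ht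
  have ht1 : (1:ℝ) ≤ t := by nlinarith
  have htα : α < t := by nlinarith
  have hPt : 0 < P.eval (-t) := by
    rw [heval]
    have h2' : 0 < a2 * t ^ 2 := by positivity
    have h5' : t ^ 5 * (t - (a5 + (-a4) + a3 + a1)) > 0 := by
      have : t - (a5 + (-a4) + a3 + a1) ≥ 1 + α := by ring_nf; nlinarith
      nlinarith [pow_pos (by linarith : (0:ℝ) < t) 5, hαpos]
    have hp5 : (0:ℝ) < t ^ 5 := pow_pos (by linarith) 5
    have hp4 : t ^ 4 ≤ t ^ 5 := pow_le_pow_right₀ (by linarith) (by norm_num)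
    have hp3 : t ^ 3 ≤ t ^ 5 := pow_le_pow_right₀ (by linarith) (by norm_num)
    have hp1 : t ≤ t ^ 5 := by
      calc t = t ^ 1 := (pow_one t).symm
      _ ≤ t ^ 5 := pow_le_pow_right₀ (by linarith) (by norm_num)
    have e : (-t) ^ 6 + a5 * (-t) ^ 5 + a4 * (-t) ^ 4 + a3 * (-t) ^ 3 + a2 * (-t) ^ 2 + a1 * (-t) + a0
        = t ^ 5 * (t - (a5 + (-a4) + a3 + a1)) + (-a4) * (t ^ 5 - t ^ 4) + a3 * (t ^ 5 - t ^ 3)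
          + a1 * (t ^ 5 - t) + a2 * t ^ 2 + a0 := by ring
    rw [e]
    linarith [mul_nonneg h5.le (sub_nonneg.mpr hp3),
      mul_nonneg h3.le (sub_nonneg.mpr hp3), mul_nonneg h1.le (sub_nonneg.mpr hp1),
      mul_nonneg (by linarith : (0:ℝ) ≤ -a4) (sub_nonneg.mpr hp4)]
  -- IVT gives a negative root
  have hcont : ContinuousOn (fun x : ℝ => P.eval x) (Set.Icc (-t) (-α)) :=
    (Polynomial.continuous P).continuousOn
  have hsub := intermediate_value_Icc' (by linarith : -t ≤ -α) hcont
  have h0mem : (0:ℝ) ∈ Set.Icc (P.eval (-α)) (P.eval (-t)) := ⟨hPnα.le, hPt.le⟩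
  obtain ⟨y, hy, hy0⟩ := hsub h0mem
  exact hneg y (lt_of_le_of_lt hy.2 (by linarith)) hy0
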